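/- Let ψ ∈ ℂ^d be a unit vector and define the Werner cloning map ℰ(ρ) = (d₊(n)/d₊(n+k)) · Π₊^{(n+k)} (ρ ⊗ I^{⊗k}) Π₊^{(n+k)} on the symmetric subspace of (ℂ^d)^{⊗n}, where d₊(r) = binomial(r+d-1, d-1). Then ℰ is trace-preserving on states supported on the symmetric subspace, and the fidelity of its output with n+k perfect copies satisfies F(ℰ(|ψ⟩⟨ψ|^{⊗n}), |ψ⟩⟨ψ|^{⊗(n+k)}) = √(d₊(n)/d₊(n+k)), where F(ρ,σ) = ‖√ρ √σ‖₁. -/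

import Mathlib

open Matrix
open scoped Kronecker ComplexOrder
open scoped Classical

variable {n : Type*} [Fintype n] [DecidableEq n]

/-- Density matrix predicate -/
def IsDensityMatrix (ρ : Matrix n n ℂ) : Prop := ρ.PosSemidef ∧ ρ.trace = 1

/-- von Neumann entropy, base 2 -/
noncomputable def vnEntropy (A : Matrix n n ℂ) : ℝ :=
  if h : A.IsHermitian then -∑ i, h.eigenvalues i * Real.logb 2 (h.eigenvalues i) else 0

/-- twirl over a finite group -/
noncomputable def twirl {G : Type*} [Group G] [Fintype G]
    (U : G →* Matrix.unitaryGroup n ℂ) (ρ : Matrix n n ℂ) : Matrix n n ℂ :=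
  (Fintype.card G : ℂ)⁻¹ • ∑ g : G, (U g : Matrix n n ℂ) * ρ * star (U g : Matrix n n ℂ)

/-- relative entropy of asymmetry -/
noncomputable def relEntAsym {G : Type*} [Group G] [Fintype G]
    (U : G →* Matrix.unitaryGroup n ℂ) (ρ : Matrix n n ℂ) : ℝ :=
  vnEntropy (twirl U ρ) - vnEntropy ρ

/-- the old Mathlib `Matrix.PosSemidef.sqrt` (removed upstream), restated verbatim -/
noncomputable def Matrix.PosSemidef.sqrt {A : Matrix n n ℂ} (hA : A.PosSemidef) : Matrix n n ℂ :=
  (hA.1.eigenvectorUnitary : Matrix n n ℂ) * Matrix.diagonal ((↑) ∘ Real.sqrt ∘ hA.1.eigenvalues) *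
    (star hA.1.eigenvectorUnitary : Matrix n n ℂ)

/-- square root of a PSD matrix (0 otherwise) -/
noncomputable def sqrtPSD (A : Matrix n n ℂ) : Matrix n n ℂ :=
  if h : A.PosSemidef then h.sqrt else 0

/-- trace norm -/
noncomputable def traceNorm (A : Matrix n n ℂ) : ℝ :=
  ((Matrix.posSemidef_conjTranspose_mul_self A).sqrt.trace).re

/-- fidelity F(ρ,σ) = ‖√ρ√σ‖₁ -/
noncomputable def fidelity (ρ σ : Matrix n n ℂ) : ℝ := traceNorm (sqrtPSD ρ * sqrtPSD σ)

/-- binary entropy, base 2 -/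
noncomputable def binEntropy2 (x : ℝ) : ℝ := -x * Real.logb 2 x - (1-x) * Real.logb 2 (1-x)

/-- matrix logarithm (base 2) of a Hermitian matrix -/
noncomputable def matLogb (A : Matrix n n ℂ) : Matrix n n ℂ :=
  if h : A.IsHermitian then
    (h.eigenvectorUnitary : Matrix n n ℂ) *
      Matrix.diagonal (fun i => (Real.logb 2 (h.eigenvalues i) : ℂ)) *
      star (h.eigenvectorUnitary : Matrix n n ℂ)
  else 0

/-- quantum relative entropy, +∞ if support condition fails -/
noncomputable def relEntropy (ρ σ : Matrix n n ℂ) : EReal :=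
  if ∀ v : n → ℂ, σ *ᵥ v = 0 → ρ *ᵥ v = 0 then
    (((ρ * (matLogb ρ - matLogb σ)).trace).re : EReal)
  else ⊤

/-- complete positivity -/
def IsCompletelyPositive {m : Type*} [Fintype m] [DecidableEq m]
    (Φ : Matrix n n ℂ →ₗ[ℂ] Matrix m m ℂ) : Prop :=
  ∀ (k : ℕ) (M : Matrix (Fin k × n) (Fin k × n) ℂ), M.PosSemidef →
    (Matrix.of fun p q : Fin k × m =>
      (Φ (Matrix.of fun a b => M (p.1, a) (q.1, b))) p.2 q.2).PosSemidef

/-- CPTP map -/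
def IsQuantumChannel {m : Type*} [Fintype m] [DecidableEq m]
    (Φ : Matrix n n ℂ →ₗ[ℂ] Matrix m m ℂ) : Prop :=
  IsCompletelyPositive Φ ∧ ∀ A, (Φ A).trace = A.trace

/-- G-covariance of a map between systems with representations U, V -/
def IsCovariant {m : Type*} [Fintype m] [DecidableEq m] {G : Type*} [Group G]
    (U : G →* Matrix.unitaryGroup n ℂ) (V : G →* Matrix.unitaryGroup m ℂ)
    (Φ : Matrix n n ℂ →ₗ[ℂ] Matrix m m ℂ) : Prop :=
  ∀ g A, Φ ((U g : Matrix n n ℂ) * A * star (U g : Matrix n n ℂ))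
    = (V g : Matrix m m ℂ) * Φ A * star (V g : Matrix m m ℂ)

noncomputable def tensorPowMat {d : ℕ} (U : Matrix (Fin d) (Fin d) ℂ) (r : ℕ) :
    Matrix (Fin r → Fin d) (Fin r → Fin d) ℂ :=
  Matrix.of fun f g => ∏ i, U (f i) (g i)

/-- the matrix |ψ⟩⟨ψ|^{⊗ r} -/
noncomputable def pureTensorPow {d : ℕ} (ψ : Fin d → ℂ) (r : ℕ) :
    Matrix (Fin r → Fin d) (Fin r → Fin d) ℂ :=
  Matrix.of fun f g => ∏ i, ψ (f i) * star (ψ (g i))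

/-- projector onto the symmetric subspace of (ℂ^d)^{⊗ r} -/
noncomputable def symProj (d r : ℕ) : Matrix (Fin r → Fin d) (Fin r → Fin d) ℂ :=
  ((r.factorial : ℂ))⁻¹ •
    ∑ π : Equiv.Perm (Fin r), Matrix.of fun f g => if f = g ∘ π then (1:ℂ) else 0

/-- identification of ((ℂ^d)^{⊗n}) ⊗ ((ℂ^d)^{⊗k}) with (ℂ^d)^{⊗(n+k)} -/
def tensorSplit (d n k : ℕ) : ((Fin n → Fin d) × (Fin k → Fin d)) ≃ (Fin (n + k) → Fin d) :=
  (Equiv.sumArrowEquivProdArrow (Fin n) (Fin k) (Fin d)).symm.trans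
    (Equiv.arrowCongr finSumFinEquiv (Equiv.refl (Fin d)))

/-- the Werner cloning map from n to n+k copies -/
noncomputable def wernerClone (d n k : ℕ)
    (ρ : Matrix (Fin n → Fin d) (Fin n → Fin d) ℂ) :
    Matrix (Fin (n + k) → Fin d) (Fin (n + k) → Fin d) ℂ :=
  (((n + d - 1).choose (d - 1) : ℂ) / ((n + k + d - 1).choose (d - 1))) •
    (symProj d (n + k) *
      (Matrix.reindex (tensorSplit d n k) (tensorSplit d n k)
        (ρ ⊗ₖ (1 : Matrix (Fin k → Fin d) (Fin k → Fin d) ℂ))) *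
      symProj d (n + k))

section SqrtAux
open scoped MatrixOrder

lemma Matrix.PosSemidef.posSemidef_sqrt {m : Type*} [Fintype m] [DecidableEq m]
    {A : Matrix m m ℂ} (hA : A.PosSemidef) : hA.sqrt.PosSemidef := by
  unfold Matrix.PosSemidef.sqrt
  rw [Matrix.star_eq_conjTranspose]
  refine Matrix.PosSemidef.mul_mul_conjTranspose_same (Matrix.PosSemidef.diagonal ?_) _
  intro i
  exact Complex.zero_le_real.2 (Real.sqrt_nonneg _)

lemma Matrix.PosSemidef.sqrt_mul_self {m : Type*} [Fintype m] [DecidableEq m]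
    {A : Matrix m m ℂ} (hA : A.PosSemidef) : hA.sqrt * hA.sqrt = A := by
  have hU : (star hA.1.eigenvectorUnitary : Matrix m m ℂ) * (hA.1.eigenvectorUnitary : Matrix m m ℂ) = 1 :=
    Unitary.star_mul_self_of_mem hA.1.eigenvectorUnitary.2
  unfold Matrix.PosSemidef.sqrt
  conv_rhs => rw [hA.1.spectral_theorem, Unitary.conjStarAlgAut_apply]
  rw [show ∀ X Y Z W V : Matrix m m ℂ, X * Y * Z * (W * Y * V) = X * Y * (Z * W) * Y * V by
    intros; simp only [Matrix.mul_assoc]]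
  rw [hU, Matrix.mul_one, Matrix.mul_assoc _ (diagonal _) (diagonal _), diagonal_mul_diagonal]
  congr 3
  funext i
  simp only [Function.comp_apply]
  rw [← Complex.ofReal_mul, Real.mul_self_sqrt (hA.eigenvalues_nonneg i)]
  rfl

lemma Matrix.PosSemidef.eq_sqrt_of_sq_eq {m : Type*} [Fintype m] [DecidableEq m]
    {A : Matrix m m ℂ} (hA : A.PosSemidef) {B : Matrix m m ℂ} (hB : B.PosSemidef)
    (hAB : A ^ 2 = B) : A = hB.sqrt := by
  have h1 : CFC.sqrt B = A := CFC.sqrt_unique (by rw [← hAB, sq]) hA.nonneg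
  have h2 : CFC.sqrt B = hB.sqrt := CFC.sqrt_unique hB.sqrt_mul_self hB.posSemidef_sqrt.nonneg
  rw [← h1, h2]

end SqrtAux

namespace WernerAux

open Matrix Finset

variable {dd rr nn kk : ℕ}

/-! ### counting lemmas -/

/-- number of indices mapping to `i` -/
def cnt (a : Fin rr → Fin dd) (i : Fin dd) : ℕ :=
  (Finset.univ.filter fun j => a j = i).card

lemma cnt_eq_sum (a : Fin rr → Fin dd) (i : Fin dd) :
    cnt a i = ∑ j, if a j = i then 1 else 0 := by
  rw [cnt, Finset.card_filter]

lemma cnt_card_subtype (a : Fin rr → Fin dd) (i : Fin dd) :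
    Fintype.card {j // a j = i} = cnt a i := Fintype.card_subtype _

lemma sum_cnt (a : Fin rr → Fin dd) : ∑ i, cnt a i = rr := by
  simp_rw [cnt_eq_sum]
  rw [Finset.sum_comm]
  simp

lemma cnt_comp_perm (b : Fin rr → Fin dd) (π : Equiv.Perm (Fin rr)) :
    cnt (b ∘ π) = cnt b := by
  funext i
  simp_rw [cnt_eq_sum]
  exact Equiv.sum_comp π (fun j => if b j = i then 1 else 0)

lemma exists_perm_comp {a b : Fin rr → Fin dd} (h : cnt a = cnt b) :
    ∃ π : Equiv.Perm (Fin rr), a = b ∘ π := by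
  have e : ∀ i, {j // a j = i} ≃ {j // b j = i} := fun i =>
    Fintype.equivOfCardEq (by rw [cnt_card_subtype, cnt_card_subtype, h])
  refine ⟨(Equiv.sigmaFiberEquiv a).symm.trans
    ((Equiv.sigmaCongrRight e).trans (Equiv.sigmaFiberEquiv b)), funext fun x => ?_⟩
  simp only [Function.comp_apply, Equiv.trans_apply]
  exact ((e (a x)) ⟨x, rfl⟩).2.symm

lemma card_perm_comp (a b : Fin rr → Fin dd) :
    (Finset.univ.filter fun π : Equiv.Perm (Fin rr) => a = b ∘ π).card
      = if cnt a = cnt b then ∏ i, (cnt a i).factorial else 0 := by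
  split_ifs with h
  · obtain ⟨π₀, hπ₀⟩ := exists_perm_comp h
    have hb : ∀ y, b (π₀ y) = a y := fun y => (congrFun hπ₀ y).symm
    have hcard : (Finset.univ.filter fun π : Equiv.Perm (Fin rr) => a = b ∘ π).card
        = Fintype.card {π : Equiv.Perm (Fin rr) // b ∘ π = b} := by
      rw [Fintype.card_subtype]
      apply Finset.card_bij (fun π _ => π * π₀⁻¹)
      · intro π hπ
        simp only [Finset.mem_filter, Finset.mem_univ, true_and] at hπ ⊢
        have haπ : ∀ y, b (π y) = a y := fun y => (congrFun hπ y).symm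
        funext x
        simp only [Function.comp_apply, Equiv.Perm.mul_apply]
        rw [haπ, ← hb, Equiv.Perm.coe_inv, Equiv.apply_symm_apply]
      · intro π₁ h₁ π₂ h₂ hEq
        exact mul_right_cancel hEq
      · intro τ hτ
        simp only [Finset.mem_filter, Finset.mem_univ, true_and] at hτ
        refine ⟨τ * π₀, Finset.mem_filter.2 ⟨Finset.mem_univ _, funext fun x => ?_⟩, by group⟩
        simp only [Function.comp_apply, Equiv.Perm.mul_apply]
        rw [show b (τ (π₀ x)) = b (π₀ x) from congrFun hτ (π₀ x), hb]
    rw [hcard, DomMulAct.stabilizer_card]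
    exact Finset.prod_congr rfl fun i _ => by rw [cnt_card_subtype, h]
  · rw [Finset.card_eq_zero, Finset.filter_eq_empty_iff]
    intro π _ hEq
    exact h (hEq ▸ cnt_comp_perm b π ▸ rfl)

lemma cnt_cons (x : Fin dd) (h : Fin kk → Fin dd) (i : Fin dd) :
    cnt (Fin.cons x h : Fin (kk+1) → Fin dd) i = (if x = i then 1 else 0) + cnt h i := by
  simp_rw [cnt_eq_sum]
  rw [Fin.sum_univ_succ]
  simp

lemma sum_prod_factorial (dd kk : ℕ) (m : Fin dd → ℕ) :
    ∑ h : Fin kk → Fin dd, ∏ i, (m i + cnt h i).factorial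
      = Nat.ascFactorial (∑ i, m i + dd) kk * ∏ i, (m i).factorial := by
  induction kk with
  | zero =>
    have hz : ∀ (h : Fin 0 → Fin dd) (i : Fin dd), cnt h i = 0 := by
      intro h i; simp [cnt]
    rw [Fintype.sum_eq_single (fun x => x.elim0)]
    · simp [hz]
    · intro h hne; exact absurd (funext fun x => x.elim0) hne
  | succ k ih =>
    rw [← Equiv.sum_comp (Fin.consEquiv fun _ : Fin (k+1) => Fin dd)
      (fun h => ∏ i, (m i + cnt h i).factorial), Fintype.sum_prod_type]
    have key : ∀ (x : Fin dd) (h : Fin k → Fin dd),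
        ∏ i, (m i + cnt (Fin.cons x h : Fin (k+1) → Fin dd) i).factorial
          = (m x + cnt h x + 1) * ∏ i, (m i + cnt h i).factorial := by
      intro x h
      have step : ∀ i, (m i + cnt (Fin.cons x h : Fin (k+1) → Fin dd) i).factorial
          = (if x = i then m i + cnt h i + 1 else 1) * (m i + cnt h i).factorial := by
        intro i
        rw [cnt_cons]
        split_ifs with hxi
        · rw [show m i + (1 + cnt h i) = (m i + cnt h i) + 1 by omega, Nat.factorial_succ]
        · rw [Nat.zero_add]; ring
      simp_rw [step]
      rw [Finset.prod_mul_distrib, Finset.prod_ite_eq]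
      simp
    have e1 : ∀ x : Fin dd, (∑ h : Fin k → Fin dd,
        ∏ i, (m i + cnt (Fin.consEquiv (fun _ : Fin (k+1) => Fin dd) (x, h)) i).factorial)
        = ∑ h : Fin k → Fin dd, (m x + cnt h x + 1) * ∏ i, (m i + cnt h i).factorial := by
      intro x
      exact Finset.sum_congr rfl fun h _ => key x h
    rw [Finset.sum_congr rfl fun x _ => e1 x, Finset.sum_comm]
    have e2 : ∀ h : Fin k → Fin dd,
        ∑ x : Fin dd, (m x + cnt h x + 1) * ∏ i, (m i + cnt h i).factorial
        = (∑ i, m i + dd + k) * ∏ i, (m i + cnt h i).factorial := by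
      intro h
      rw [← Finset.sum_mul]
      congr 1
      rw [Finset.sum_add_distrib, Finset.sum_add_distrib, sum_cnt]
      simp only [Finset.sum_const, Finset.card_univ, Fintype.card_fin, smul_eq_mul, mul_one]
      omega
    rw [Finset.sum_congr rfl fun h _ => e2 h, ← Finset.mul_sum, ih,
      Nat.ascFactorial_succ]
    ring

lemma choose_asc_identity (nn e kk : ℕ) :
    Nat.ascFactorial (nn + e + 1) kk * nn.factorial * ((nn + e).choose e)
      = ((nn + kk + e).choose e) * (nn + kk).factorial := by
  apply Nat.eq_of_mul_eq_mul_right (Nat.factorial_pos e)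
  have h1 : (nn+e).choose e * e.factorial * nn.factorial = (nn+e).factorial := by
    have := Nat.choose_mul_factorial_mul_factorial (Nat.le_add_left e nn)
    simpa using this
  have h2 : (nn+kk+e).choose e * e.factorial * (nn+kk).factorial = (nn+kk+e).factorial := by
    have := Nat.choose_mul_factorial_mul_factorial (Nat.le_add_left e (nn+kk))
    simpa using this
  calc Nat.ascFactorial (nn+e+1) kk * nn.factorial * ((nn+e).choose e) * e.factorial
      = Nat.ascFactorial (nn+e+1) kk * ((nn+e).choose e * e.factorial * nn.factorial) := by ring
    _ = (nn+e).factorial * Nat.ascFactorial (nn+e+1) kk := by rw [h1]; ring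
    _ = (nn+e+kk).factorial := Nat.factorial_mul_ascFactorial (nn+e) kk
    _ = (nn+kk+e).factorial := by rw [Nat.add_right_comm]
    _ = (nn+kk+e).choose e * (nn+kk).factorial * e.factorial := by rw [← h2]; ring

/-! ### permutation matrices and the symmetrizer -/

noncomputable def permMat (dd rr : ℕ) (π : Equiv.Perm (Fin rr)) :
    Matrix (Fin rr → Fin dd) (Fin rr → Fin dd) ℂ :=
  Matrix.of fun f g => if f = g ∘ π then 1 else 0

lemma symProj_eq_sum (dd rr : ℕ) :
    symProj dd rr = ((rr.factorial : ℂ))⁻¹ • ∑ π : Equiv.Perm (Fin rr), permMat dd rr π := rfl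

lemma comp_perm_eq_iff {α : Type*} (f g : Fin rr → α) (π : Equiv.Perm (Fin rr)) :
    f = g ∘ ⇑π ↔ g = f ∘ ⇑π⁻¹ := by
  constructor
  · rintro rfl; funext x; simp
  · rintro rfl; funext x; simp

lemma permMat_mul (π σ : Equiv.Perm (Fin rr)) :
    permMat dd rr π * permMat dd rr σ = permMat dd rr (σ * π) := by
  ext f g
  simp only [Matrix.mul_apply, permMat, Matrix.of_apply]
  have rw1 : ∀ h : Fin rr → Fin dd,
      (if f = h ∘ ⇑π then (1:ℂ) else 0) = (if h = f ∘ ⇑π⁻¹ then 1 else 0) :=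
    fun h => if_congr (comp_perm_eq_iff f h π) rfl rfl
  simp_rw [rw1, ite_mul, one_mul, zero_mul]
  rw [Finset.sum_ite_eq' Finset.univ (f ∘ ⇑π⁻¹)
    (fun h => if h = g ∘ ⇑σ then (1:ℂ) else 0)]
  simp only [Finset.mem_univ, if_true]
  refine if_congr ?_ rfl rfl
  rw [Equiv.Perm.coe_mul]
  constructor
  · intro hEq
    funext x
    have := congrFun hEq (π x)
    simpa using this
  · rintro rfl
    funext x
    simp

lemma symProj_mul_self (dd rr : ℕ) : symProj dd rr * symProj dd rr = symProj dd rr := by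
  have hfac : ((rr.factorial : ℂ)) ≠ 0 := Nat.cast_ne_zero.2 (Nat.factorial_pos rr).ne'
  rw [symProj_eq_sum, Matrix.smul_mul, Matrix.mul_smul, smul_smul, Finset.sum_mul]
  simp_rw [Finset.mul_sum, permMat_mul]
  have hs : ∀ π : Equiv.Perm (Fin rr),
      (∑ σ : Equiv.Perm (Fin rr), permMat dd rr (σ * π)) = ∑ σ, permMat dd rr σ :=
    fun π => Equiv.sum_comp (Equiv.mulRight π) (permMat dd rr)
  rw [Finset.sum_congr rfl fun π _ => hs π, Finset.sum_const, Finset.card_univ,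
    Fintype.card_perm, Fintype.card_fin, ← Nat.cast_smul_eq_nsmul ℂ, smul_smul]
  congr 1
  field_simp

lemma permMat_conjTranspose (π : Equiv.Perm (Fin rr)) :
    (permMat dd rr π)ᴴ = permMat dd rr π⁻¹ := by
  ext f g
  simp only [Matrix.conjTranspose_apply, permMat, Matrix.of_apply, apply_ite star,
    star_one, star_zero]
  exact if_congr (comp_perm_eq_iff g f π) rfl rfl

lemma symProj_isHermitian (dd rr : ℕ) : (symProj dd rr).IsHermitian := by
  show _ᴴ = _
  rw [symProj_eq_sum, Matrix.conjTranspose_smul, Matrix.conjTranspose_sum]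
  simp_rw [permMat_conjTranspose]
  have hsum : (∑ π : Equiv.Perm (Fin rr), permMat dd rr π⁻¹) = ∑ π, permMat dd rr π :=
    Equiv.sum_comp (Equiv.inv (Equiv.Perm (Fin rr))) (permMat dd rr)
  rw [hsum]
  congr 1
  simp

lemma symProj_apply (f g : Fin rr → Fin dd) :
    symProj dd rr f g = ((rr.factorial : ℂ))⁻¹ *
      ((Finset.univ.filter fun π : Equiv.Perm (Fin rr) => f = g ∘ π).card : ℂ) := by
  rw [symProj_eq_sum]
  simp only [Matrix.smul_apply, Matrix.sum_apply, permMat, Matrix.of_apply, smul_eq_mul]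
  rw [Finset.sum_boole]

end WernerAux

namespace WernerAux

open Matrix Finset

lemma tensorSplit_apply (dd nn kk : ℕ) (f : Fin nn → Fin dd) (h : Fin kk → Fin dd)
    (x : Fin nn ⊕ Fin kk) :
    tensorSplit dd nn kk (f, h) (finSumFinEquiv x) = Sum.elim f h x := by
  simp [tensorSplit, Equiv.sumArrowEquivProdArrow, Equiv.arrowCongr]

lemma cnt_tensorSplit {dd nn kk : ℕ} (f : Fin nn → Fin dd) (h : Fin kk → Fin dd) (i : Fin dd) :
    cnt (tensorSplit dd nn kk (f, h)) i = cnt f i + cnt h i := by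
  simp_rw [cnt_eq_sum]
  rw [← Equiv.sum_comp finSumFinEquiv
    (fun J => if tensorSplit dd nn kk (f, h) J = i then (1:ℕ) else 0)]
  simp_rw [tensorSplit_apply]
  rw [Fintype.sum_sum_type]
  simp only [Sum.elim_inl, Sum.elim_inr]
  congr

lemma key_T (dd nn kk e : ℕ) (hde : dd = e + 1) (f g : Fin nn → Fin dd) :
    ((nn + e).choose e : ℂ) *
      ∑ h : Fin kk → Fin dd,
        symProj dd (nn+kk) (tensorSplit dd nn kk (g, h)) (tensorSplit dd nn kk (f, h))
    = ((nn + kk + e).choose e : ℂ) * symProj dd nn g f := by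
  have hfac1 : ((nn.factorial : ℂ)) ≠ 0 := Nat.cast_ne_zero.2 (Nat.factorial_pos nn).ne'
  have hfac2 : (((nn+kk).factorial : ℂ)) ≠ 0 := Nat.cast_ne_zero.2 (Nat.factorial_pos _).ne'
  have hcond : ∀ h : Fin kk → Fin dd,
      (cnt (tensorSplit dd nn kk (g, h)) = cnt (tensorSplit dd nn kk (f, h))) ↔ (cnt g = cnt f) := by
    intro h
    constructor
    · intro H; funext i
      have := congrFun H i
      rw [cnt_tensorSplit, cnt_tensorSplit] at this
      omega
    · intro H; funext i
      rw [cnt_tensorSplit, cnt_tensorSplit, H]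
  simp_rw [symProj_apply]
  by_cases hfg : cnt g = cnt f
  · have hc : ∀ h : Fin kk → Fin dd,
        (((Finset.univ.filter fun π : Equiv.Perm (Fin (nn+kk)) =>
          tensorSplit dd nn kk (g, h) = tensorSplit dd nn kk (f, h) ∘ π).card : ℕ) : ℂ)
        = ((∏ i, (cnt g i + cnt h i).factorial : ℕ) : ℂ) := by
      intro h
      rw [card_perm_comp, if_pos ((hcond h).2 hfg)]
      norm_cast
      exact Finset.prod_congr rfl fun i _ => by rw [cnt_tensorSplit]
    simp_rw [hc]
    rw [card_perm_comp, if_pos hfg, ← Finset.mul_sum, ← Nat.cast_sum,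
      sum_prod_factorial dd kk (cnt g), sum_cnt]
    have hscalar : ((nn + e).choose e : ℂ) * (((nn+kk).factorial : ℂ))⁻¹ *
        ((Nat.ascFactorial (nn + dd) kk : ℕ) : ℂ)
        = ((nn + kk + e).choose e : ℂ) * ((nn.factorial : ℂ))⁻¹ := by
      subst hde
      have hnat : (nn + e).choose e * Nat.ascFactorial (nn + (e+1)) kk * nn.factorial
          = (nn + kk + e).choose e * (nn + kk).factorial := by
        rw [show nn + (e+1) = nn + e + 1 by omega, ← choose_asc_identity nn e kk]
        ring
      have hC : ((nn + e).choose e : ℂ) * ((Nat.ascFactorial (nn + (e+1)) kk : ℕ) : ℂ) *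
          ((nn.factorial : ℕ) : ℂ)
          = ((nn + kk + e).choose e : ℂ) * (((nn + kk).factorial : ℕ) : ℂ) := by
        exact_mod_cast hnat
      field_simp
      linear_combination hC
    push_cast
    push_cast at hscalar
    linear_combination (∏ i, ((cnt g i).factorial : ℂ)) * hscalar
  · have hz : ∀ h : Fin kk → Fin dd,
        (((Finset.univ.filter fun π : Equiv.Perm (Fin (nn+kk)) =>
          tensorSplit dd nn kk (g, h) = tensorSplit dd nn kk (f, h) ∘ π).card : ℕ) : ℂ) = 0 := by
      intro h
      rw [card_perm_comp, if_neg (fun H => hfg ((hcond h).1 H))]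
      simp
    simp_rw [hz]
    rw [card_perm_comp, if_neg hfg]
    simp

end WernerAux

namespace WernerAux

open Matrix Finset

lemma trace_mul_expand {m : Type*} [Fintype m] (A B : Matrix m m ℂ) :
    (A * B).trace = ∑ i, ∑ j, A i j * B j i := by
  simp [Matrix.trace, Matrix.diag, Matrix.mul_apply]

lemma trace_kron_symProj (dd nn kk e : ℕ) (hde : dd = e + 1)
    (ρ : Matrix (Fin nn → Fin dd) (Fin nn → Fin dd) ℂ) :
    ((nn + e).choose e : ℂ) *
      ((Matrix.reindex (tensorSplit dd nn kk) (tensorSplit dd nn kk)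
        (ρ ⊗ₖ (1 : Matrix (Fin kk → Fin dd) (Fin kk → Fin dd) ℂ))) * symProj dd (nn+kk)).trace
    = ((nn + kk + e).choose e : ℂ) * (ρ * symProj dd nn).trace := by
  set A := Matrix.reindex (tensorSplit dd nn kk) (tensorSplit dd nn kk)
    (ρ ⊗ₖ (1 : Matrix (Fin kk → Fin dd) (Fin kk → Fin dd) ℂ)) with hA
  have hAentry : ∀ p q : (Fin nn → Fin dd) × (Fin kk → Fin dd),
      A (tensorSplit dd nn kk p) (tensorSplit dd nn kk q)
        = ρ p.1 q.1 * (if p.2 = q.2 then 1 else 0) := by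
    intro p q
    rw [hA, Matrix.reindex_apply, Matrix.submatrix_apply, Equiv.symm_apply_apply,
      Equiv.symm_apply_apply, Matrix.kroneckerMap_apply, Matrix.one_apply]
  have expand : (A * symProj dd (nn+kk)).trace
      = ∑ f : Fin nn → Fin dd, ∑ g : Fin nn → Fin dd, ρ f g *
          ∑ h : Fin kk → Fin dd,
            symProj dd (nn+kk) (tensorSplit dd nn kk (g, h)) (tensorSplit dd nn kk (f, h)) := by
    rw [trace_mul_expand]
    rw [← Equiv.sum_comp (tensorSplit dd nn kk)
      (fun F => ∑ G, A F G * symProj dd (nn+kk) G F)]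
    have inner : ∀ p : (Fin nn → Fin dd) × (Fin kk → Fin dd),
        (∑ G, A (tensorSplit dd nn kk p) G * symProj dd (nn+kk) G (tensorSplit dd nn kk p))
        = ∑ g : Fin nn → Fin dd, ρ p.1 g *
            symProj dd (nn+kk) (tensorSplit dd nn kk (g, p.2)) (tensorSplit dd nn kk p) := by
      intro p
      rw [← Equiv.sum_comp (tensorSplit dd nn kk)
        (fun G => A (tensorSplit dd nn kk p) G * symProj dd (nn+kk) G (tensorSplit dd nn kk p))]
      rw [Fintype.sum_prod_type]
      refine Finset.sum_congr rfl fun g _ => ?_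
      rw [Finset.sum_eq_single p.2]
      · rw [hAentry p (g, p.2), if_pos rfl, mul_one]
      · intro h' _ hne
        rw [hAentry p (g, h'), if_neg (fun He => hne He.symm), mul_zero, zero_mul]
      · intro habs; exact absurd (Finset.mem_univ _) habs
    rw [Finset.sum_congr rfl fun p _ => inner p]
    rw [Fintype.sum_prod_type]
    rw [Finset.sum_congr rfl fun f _ => Finset.sum_comm]
    refine Finset.sum_congr rfl fun f _ => ?_
    refine Finset.sum_congr rfl fun g _ => ?_
    rw [Finset.mul_sum]
  rw [expand, Finset.mul_sum]
  have step : ∀ f : Fin nn → Fin dd,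
      (((nn + e).choose e : ℂ) * ∑ g, ρ f g * ∑ h : Fin kk → Fin dd,
        symProj dd (nn+kk) (tensorSplit dd nn kk (g, h)) (tensorSplit dd nn kk (f, h)))
      = ∑ g, ρ f g * (((nn + kk + e).choose e : ℂ) * symProj dd nn g f) := by
    intro f
    rw [Finset.mul_sum]
    refine Finset.sum_congr rfl fun g _ => ?_
    rw [← mul_assoc, mul_comm (((nn + e).choose e : ℂ)) (ρ f g), mul_assoc,
      key_T dd nn kk e hde f g]
  rw [Finset.sum_congr rfl fun f _ => step f, trace_mul_expand]
  rw [Finset.mul_sum]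
  refine Finset.sum_congr rfl fun f _ => ?_
  rw [Finset.mul_sum]
  refine Finset.sum_congr rfl fun g _ => ?_
  ring

end WernerAux

namespace WernerAux

open Matrix Finset

variable {dd rr nn kk : ℕ}

noncomputable def pureVec (ψ : Fin dd → ℂ) (rr : ℕ) : (Fin rr → Fin dd) → ℂ :=
  fun f => ∏ i, ψ (f i)

lemma pureTensorPow_eq (ψ : Fin dd → ℂ) (rr : ℕ) :
    pureTensorPow ψ rr = Matrix.of fun f g => pureVec ψ rr f * star (pureVec ψ rr g) := by
  ext f g
  simp [pureTensorPow, pureVec, Finset.prod_mul_distrib, star_prod]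

lemma star_mul_pureVec_sum (ψ : Fin dd → ℂ) (hψ : ∑ i, ‖ψ i‖ ^ 2 = 1) (rr : ℕ) :
    ∑ f : Fin rr → Fin dd, star (pureVec ψ rr f) * pureVec ψ rr f = 1 := by
  have hone : ∑ x : Fin dd, star (ψ x) * ψ x = 1 := by
    have : ∀ x : Fin dd, star (ψ x) * ψ x = ((‖ψ x‖ ^ 2 : ℝ) : ℂ) := by
      intro x
      rw [Complex.star_def, ← Complex.normSq_eq_conj_mul_self]
      norm_cast
      rw [Complex.normSq_eq_norm_sq]
    simp_rw [this]
    rw [← Complex.ofReal_sum, hψ, Complex.ofReal_one]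
  calc ∑ f : Fin rr → Fin dd, star (pureVec ψ rr f) * pureVec ψ rr f
      = ∑ f : Fin rr → Fin dd, ∏ i, (star (ψ (f i)) * ψ (f i)) := by
        refine Finset.sum_congr rfl fun f _ => ?_
        rw [pureVec, star_prod, ← Finset.prod_mul_distrib]
    _ = ∏ _i : Fin rr, ∑ x : Fin dd, star (ψ x) * ψ x := by
        rw [Finset.prod_univ_sum]
        rw [Fintype.piFinset_univ]
    _ = 1 := by rw [hone]; simp

lemma pureVec_tensorSplit (ψ : Fin dd → ℂ) (f : Fin nn → Fin dd) (h : Fin kk → Fin dd) :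
    pureVec ψ (nn+kk) (tensorSplit dd nn kk (f, h)) = pureVec ψ nn f * pureVec ψ kk h := by
  rw [pureVec, ← Equiv.prod_comp finSumFinEquiv
    (fun J => ψ (tensorSplit dd nn kk (f, h) J))]
  simp_rw [tensorSplit_apply]
  rw [Fintype.prod_sum_type]
  rfl

lemma permMat_mulVec (ψ : Fin dd → ℂ) (π : Equiv.Perm (Fin rr)) :
    permMat dd rr π *ᵥ pureVec ψ rr = pureVec ψ rr := by
  funext f
  simp only [Matrix.mulVec, dotProduct, permMat, Matrix.of_apply]
  have rw1 : ∀ g : Fin rr → Fin dd,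
      (if f = g ∘ ⇑π then (1:ℂ) else 0) = (if g = f ∘ ⇑π⁻¹ then 1 else 0) :=
    fun g => if_congr (comp_perm_eq_iff f g π) rfl rfl
  simp_rw [rw1, ite_mul, one_mul, zero_mul]
  rw [Finset.sum_ite_eq' Finset.univ (f ∘ ⇑π⁻¹) (fun g => pureVec ψ rr g)]
  simp only [Finset.mem_univ, if_true]
  rw [pureVec, pureVec]
  exact Equiv.prod_comp π⁻¹ (fun i => ψ (f i))

lemma sum_mulVec' {ι m n : Type*} [Fintype n] (s : Finset ι) (M : ι → Matrix m n ℂ)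
    (v : n → ℂ) : (∑ i ∈ s, M i) *ᵥ v = ∑ i ∈ s, (M i *ᵥ v) := by
  funext f
  simp only [Matrix.mulVec, dotProduct, Matrix.sum_apply, Finset.sum_mul,
    Finset.sum_apply]
  exact Finset.sum_comm

lemma symProj_mulVec (ψ : Fin dd → ℂ) :
    symProj dd rr *ᵥ pureVec ψ rr = pureVec ψ rr := by
  have hfac : ((rr.factorial : ℂ)) ≠ 0 := Nat.cast_ne_zero.2 (Nat.factorial_pos rr).ne'
  rw [symProj_eq_sum, Matrix.smul_mulVec, sum_mulVec']
  simp_rw [permMat_mulVec]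
  rw [Finset.sum_const, Finset.card_univ, Fintype.card_perm, Fintype.card_fin,
    ← Nat.cast_smul_eq_nsmul ℂ, smul_smul, inv_mul_cancel₀ hfac, one_smul]

lemma dot_symProj_mulVec (ψ : Fin dd → ℂ) (w : (Fin rr → Fin dd) → ℂ) :
    star (pureVec ψ rr) ⬝ᵥ (symProj dd rr *ᵥ w) = star (pureVec ψ rr) ⬝ᵥ w := by
  rw [Matrix.dotProduct_mulVec]
  congr 1
  conv_lhs => rw [← symProj_isHermitian dd rr]
  rw [← Matrix.star_mulVec, symProj_mulVec]

lemma sandwich (ψ : Fin dd → ℂ) (M : Matrix (Fin rr → Fin dd) (Fin rr → Fin dd) ℂ) :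
    pureTensorPow ψ rr * M * pureTensorPow ψ rr
      = (star (pureVec ψ rr) ⬝ᵥ (M *ᵥ pureVec ψ rr)) • pureTensorPow ψ rr := by
  ext f g
  simp only [Matrix.mul_apply, Matrix.smul_apply, pureTensorPow_eq, Matrix.of_apply,
    smul_eq_mul, Matrix.mulVec, dotProduct, Pi.star_apply]
  calc ∑ b, (∑ a, (pureVec ψ rr f * star (pureVec ψ rr a)) * M a b) *
        (pureVec ψ rr b * star (pureVec ψ rr g))
      = ∑ b, ∑ a, ((pureVec ψ rr f * star (pureVec ψ rr a)) * M a b) *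
          (pureVec ψ rr b * star (pureVec ψ rr g)) := by
        refine Finset.sum_congr rfl fun b _ => ?_
        rw [Finset.sum_mul]
    _ = ∑ a, ∑ b, ((pureVec ψ rr f * star (pureVec ψ rr a)) * M a b) *
          (pureVec ψ rr b * star (pureVec ψ rr g)) := Finset.sum_comm
    _ = (∑ a, star (pureVec ψ rr a) * ∑ b, M a b * pureVec ψ rr b) *
          (pureVec ψ rr f * star (pureVec ψ rr g)) := by
        rw [Finset.sum_mul]
        refine Finset.sum_congr rfl fun a _ => ?_
        rw [Finset.mul_sum, Finset.sum_mul]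
        refine Finset.sum_congr rfl fun b _ => by ring

lemma posSemidef_pureTensorPow (ψ : Fin dd → ℂ) (rr : ℕ) :
    (pureTensorPow ψ rr).PosSemidef := by
  rw [Matrix.posSemidef_iff_dotProduct_mulVec]
  constructor
  · show _ᴴ = _
    ext f g
    simp only [Matrix.conjTranspose_apply, pureTensorPow_eq, Matrix.of_apply, star_mul',
      star_star]
    ring
  · intro x
    have hval : dotProduct (star x) (pureTensorPow ψ rr *ᵥ x)
        = star (∑ g, star (pureVec ψ rr g) * x g) * (∑ g, star (pureVec ψ rr g) * x g) := by
      simp only [dotProduct, Matrix.mulVec, pureTensorPow_eq, Matrix.of_apply,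
        Pi.star_apply, star_sum, star_mul', star_star]
      simp_rw [Finset.sum_mul, Finset.mul_sum]
      refine Finset.sum_congr rfl fun a _ => Finset.sum_congr rfl fun b _ => by ring
    rw [hval]
    exact star_mul_self_nonneg _

lemma ptp_mul_self (ψ : Fin dd → ℂ) (hψ : ∑ i, ‖ψ i‖ ^ 2 = 1) (rr : ℕ) :
    pureTensorPow ψ rr * pureTensorPow ψ rr = pureTensorPow ψ rr := by
  ext f g
  simp only [Matrix.mul_apply, pureTensorPow_eq, Matrix.of_apply]
  calc ∑ a, (pureVec ψ rr f * star (pureVec ψ rr a)) * (pureVec ψ rr a * star (pureVec ψ rr g))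
      = (pureVec ψ rr f * star (pureVec ψ rr g)) *
          ∑ a, star (pureVec ψ rr a) * pureVec ψ rr a := by
        rw [Finset.mul_sum]
        exact Finset.sum_congr rfl fun a _ => by ring
    _ = pureVec ψ rr f * star (pureVec ψ rr g) := by
        rw [star_mul_pureVec_sum ψ hψ rr, mul_one]

lemma ptp_trace (ψ : Fin dd → ℂ) (hψ : ∑ i, ‖ψ i‖ ^ 2 = 1) (rr : ℕ) :
    (pureTensorPow ψ rr).trace = 1 := by
  rw [Matrix.trace]
  calc ∑ f, (pureTensorPow ψ rr).diag f
      = ∑ f : Fin rr → Fin dd, star (pureVec ψ rr f) * pureVec ψ rr f := by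
        refine Finset.sum_congr rfl fun f _ => ?_
        rw [Matrix.diag]
        simp only [pureTensorPow_eq, Matrix.of_apply]
        ring
    _ = 1 := star_mul_pureVec_sum ψ hψ rr

lemma psd_smul_real {m : Type*} [Fintype m] [DecidableEq m] {A : Matrix m m ℂ}
    (hA : A.PosSemidef) {c : ℝ} (hc : 0 ≤ c) : (((c : ℂ)) • A).PosSemidef := by
  rw [Matrix.posSemidef_iff_dotProduct_mulVec]
  constructor
  · show _ᴴ = _
    rw [Matrix.conjTranspose_smul, hA.1]
    congr 1
    simp [Complex.star_def, Complex.conj_ofReal]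
  · intro x
    rw [Matrix.smul_mulVec, dotProduct_smul, smul_eq_mul]
    exact mul_nonneg (by exact_mod_cast hc) (hA.dotProduct_mulVec_nonneg x)

lemma sqrt_congr {m : Type*} [Fintype m] [DecidableEq m] {A B : Matrix m m ℂ}
    (hA : A.PosSemidef) (hB : B.PosSemidef) (h : A = B) : hA.sqrt = hB.sqrt := by
  subst h; rfl

end WernerAux

namespace WernerAux

open Matrix Finset

lemma reindex_kron_apply {dd nn kk : ℕ} (M : Matrix (Fin nn → Fin dd) (Fin nn → Fin dd) ℂ)
    (p q : (Fin nn → Fin dd) × (Fin kk → Fin dd)) :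
    (Matrix.reindex (tensorSplit dd nn kk) (tensorSplit dd nn kk)
      (M ⊗ₖ (1 : Matrix (Fin kk → Fin dd) (Fin kk → Fin dd) ℂ)))
      (tensorSplit dd nn kk p) (tensorSplit dd nn kk q)
    = M p.1 q.1 * (if p.2 = q.2 then 1 else 0) := by
  rw [Matrix.reindex_apply, Matrix.submatrix_apply, Equiv.symm_apply_apply,
    Equiv.symm_apply_apply, Matrix.kroneckerMap_apply, Matrix.one_apply]

lemma posSemidef_kron_one {dd nn kk : ℕ} {P : Matrix (Fin nn → Fin dd) (Fin nn → Fin dd) ℂ}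
    (hP : P.PosSemidef) :
    (P ⊗ₖ (1 : Matrix (Fin kk → Fin dd) (Fin kk → Fin dd) ℂ)).PosSemidef := by
  rw [Matrix.posSemidef_iff_dotProduct_mulVec]
  constructor
  · show _ᴴ = _
    ext p q
    have h1 : star (P q.1 p.1) = P p.1 q.1 := by
      have := congrFun (congrFun hP.1 p.1) q.1
      simpa using this
    simp only [Matrix.conjTranspose_apply, Matrix.kroneckerMap_apply, Matrix.one_apply,
      star_mul', apply_ite (star : ℂ → ℂ), star_one, star_zero, h1]
    congr 1
    exact if_congr eq_comm rfl rfl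
  · intro x
    have expand : dotProduct (star x)
        ((P ⊗ₖ (1 : Matrix (Fin kk → Fin dd) (Fin kk → Fin dd) ℂ)) *ᵥ x)
        = ∑ h : Fin kk → Fin dd,
            dotProduct (star fun f => x (f, h)) (P *ᵥ fun f => x (f, h)) := by
      simp only [dotProduct, Matrix.mulVec, Matrix.kroneckerMap_apply,
        Matrix.one_apply, Pi.star_apply]
      rw [Fintype.sum_prod_type]
      have inner : ∀ (f : Fin nn → Fin dd) (h : Fin kk → Fin dd),
          (∑ q : (Fin nn → Fin dd) × (Fin kk → Fin dd),
            P f q.1 * (if h = q.2 then (1:ℂ) else 0) * x q)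
          = ∑ g, P f g * x (g, h) := by
        intro f h
        rw [Fintype.sum_prod_type]
        refine Finset.sum_congr rfl fun g _ => ?_
        rw [Finset.sum_eq_single h]
        · rw [if_pos rfl, mul_one]
        · intro h' _ hne
          rw [if_neg (fun He => hne He.symm), mul_zero, zero_mul]
        · intro habs; exact absurd (Finset.mem_univ _) habs
      simp_rw [inner]
      exact Finset.sum_comm
    rw [expand]
    exact Finset.sum_nonneg fun h _ => hP.dotProduct_mulVec_nonneg _

lemma dot_kron_pure {dd nn kk : ℕ} (ψ : Fin dd → ℂ) (hψ : ∑ i, ‖ψ i‖ ^ 2 = 1) :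
    star (pureVec ψ (nn+kk)) ⬝ᵥ
      ((Matrix.reindex (tensorSplit dd nn kk) (tensorSplit dd nn kk)
        (pureTensorPow ψ nn ⊗ₖ (1 : Matrix (Fin kk → Fin dd) (Fin kk → Fin dd) ℂ)))
        *ᵥ pureVec ψ (nn+kk)) = 1 := by
  set A := Matrix.reindex (tensorSplit dd nn kk) (tensorSplit dd nn kk)
    (pureTensorPow ψ nn ⊗ₖ (1 : Matrix (Fin kk → Fin dd) (Fin kk → Fin dd) ℂ)) with hA
  have inner : ∀ p : (Fin nn → Fin dd) × (Fin kk → Fin dd),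
      (∑ G, A (tensorSplit dd nn kk p) G * pureVec ψ (nn+kk) G)
      = (∑ g, pureTensorPow ψ nn p.1 g * pureVec ψ nn g) * pureVec ψ kk p.2 := by
    intro p
    rw [← Equiv.sum_comp (tensorSplit dd nn kk)
      (fun G => A (tensorSplit dd nn kk p) G * pureVec ψ (nn+kk) G), Fintype.sum_prod_type]
    rw [Finset.sum_mul]
    refine Finset.sum_congr rfl fun g _ => ?_
    rw [Finset.sum_eq_single p.2]
    · rw [hA, reindex_kron_apply, if_pos rfl, mul_one, pureVec_tensorSplit]
      ring
    · intro h' _ hne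
      rw [hA, reindex_kron_apply]
      rw [if_neg (fun He => hne He.symm), mul_zero, zero_mul]
    · intro habs; exact absurd (Finset.mem_univ _) habs
  have expand : star (pureVec ψ (nn+kk)) ⬝ᵥ (A *ᵥ pureVec ψ (nn+kk))
      = ∑ p : (Fin nn → Fin dd) × (Fin kk → Fin dd),
          star (pureVec ψ nn p.1 * pureVec ψ kk p.2) *
            ((∑ g, pureTensorPow ψ nn p.1 g * pureVec ψ nn g) * pureVec ψ kk p.2) := by
    rw [dotProduct]
    simp only [Matrix.mulVec, dotProduct, Pi.star_apply]
    rw [← Equiv.sum_comp (tensorSplit dd nn kk)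
      (fun F => star (pureVec ψ (nn+kk) F) * ∑ G, A F G * pureVec ψ (nn+kk) G)]
    refine Finset.sum_congr rfl fun p _ => ?_
    rw [inner p, pureVec_tensorSplit]
  rw [expand]
  have flatten : ∑ p : (Fin nn → Fin dd) × (Fin kk → Fin dd),
      star (pureVec ψ nn p.1 * pureVec ψ kk p.2) *
        ((∑ g, pureTensorPow ψ nn p.1 g * pureVec ψ nn g) * pureVec ψ kk p.2)
      = (∑ f, star (pureVec ψ nn f) * pureVec ψ nn f) *
        ((∑ g, star (pureVec ψ nn g) * pureVec ψ nn g) *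
         (∑ h, star (pureVec ψ kk h) * pureVec ψ kk h)) := by
    simp only [pureTensorPow_eq, Matrix.of_apply]
    rw [Fintype.sum_prod_type]
    simp_rw [star_mul', Finset.sum_mul, Finset.mul_sum]
    refine Finset.sum_congr rfl fun f _ => ?_
    rw [Finset.sum_comm]
    refine Finset.sum_congr rfl fun g _ => Finset.sum_congr rfl fun h _ => by ring
  rw [flatten, star_mul_pureVec_sum ψ hψ nn, star_mul_pureVec_sum ψ hψ kk]
  simp

end WernerAux

open WernerAux

theorem wernerClone_trace_and_fidelity {d n k : ℕ} (hd : 1 ≤ d) (hn : 1 ≤ n)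
    (ψ : Fin d → ℂ) (hψ : ∑ i, ‖ψ i‖ ^ 2 = 1) :
    (∀ ρ : Matrix (Fin n → Fin d) (Fin n → Fin d) ℂ, ρ.PosSemidef →
      symProj d n * ρ * symProj d n = ρ → (wernerClone d n k ρ).trace = ρ.trace) ∧
    fidelity (wernerClone d n k (pureTensorPow ψ n)) (pureTensorPow ψ (n + k))
      = Real.sqrt (((n + d - 1).choose (d - 1) : ℝ) / ((n + k + d - 1).choose (d - 1))) := by
  obtain ⟨e, rfl⟩ : ∃ e, d = e + 1 := ⟨d - 1, by omega⟩
  have h1 : n + (e+1) - 1 = n + e := by omega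
  have h2 : (e+1) - 1 = e := by omega
  have h3 : n + k + (e+1) - 1 = n + k + e := by omega
  have hC1 : (((n+e).choose e : ℂ)) ≠ 0 := Nat.cast_ne_zero.2 (Nat.choose_pos (by omega)).ne'
  have hC2 : (((n+k+e).choose e : ℂ)) ≠ 0 := Nat.cast_ne_zero.2 (Nat.choose_pos (by omega)).ne'
  constructor
  · -- trace preservation
    intro ρ _ hsupp
    unfold wernerClone
    rw [Matrix.trace_smul, smul_eq_mul, h1, h2, h3]
    set A := Matrix.reindex (tensorSplit (e+1) n k) (tensorSplit (e+1) n k)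
      (ρ ⊗ₖ (1 : Matrix (Fin k → Fin (e+1)) (Fin k → Fin (e+1)) ℂ)) with hAdef
    have hpj := symProj_mul_self (e+1) (n+k)
    have hpjn := symProj_mul_self (e+1) n
    have t1 : (symProj (e+1) (n+k) * A * symProj (e+1) (n+k)).trace
        = (A * symProj (e+1) (n+k)).trace := by
      calc (symProj (e+1) (n+k) * A * symProj (e+1) (n+k)).trace
          = (symProj (e+1) (n+k) * (symProj (e+1) (n+k) * A)).trace := by
            rw [Matrix.trace_mul_comm]
        _ = ((symProj (e+1) (n+k) * symProj (e+1) (n+k)) * A).trace := by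
            rw [Matrix.mul_assoc]
        _ = (A * symProj (e+1) (n+k)).trace := by rw [hpj, Matrix.trace_mul_comm]
    have t2 : (ρ * symProj (e+1) n).trace = ρ.trace := by
      conv_lhs => rw [← hsupp]
      rw [Matrix.mul_assoc (symProj (e+1) n * ρ), hpjn, hsupp]
    have hkey := trace_kron_symProj (e+1) n k e rfl ρ
    rw [t2] at hkey
    rw [t1]
    field_simp
    linear_combination hkey
  · -- fidelity
    set P := pureTensorPow ψ n with hPdef
    set σ := pureTensorPow ψ (n+k) with hσdef
    set v := pureVec ψ (n+k) with hvdef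
    set c : ℝ := (((n + (e+1) - 1).choose ((e+1) - 1) : ℝ))
      / (((n + k + (e+1) - 1).choose ((e+1) - 1) : ℝ)) with hcdef
    have hc0 : 0 ≤ c := by positivity
    set A := Matrix.reindex (tensorSplit (e+1) n k) (tensorSplit (e+1) n k)
      (P ⊗ₖ (1 : Matrix (Fin k → Fin (e+1)) (Fin k → Fin (e+1)) ℂ)) with hAdef
    have hAPSD : A.PosSemidef := by
      rw [hAdef, Matrix.reindex_apply]
      exact (posSemidef_kron_one (posSemidef_pureTensorPow ψ n)).submatrix _
    have hsandPSD : (symProj (e+1) (n+k) * A * symProj (e+1) (n+k)).PosSemidef := by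
      have := hAPSD.conjTranspose_mul_mul_same (symProj (e+1) (n+k))
      rwa [symProj_isHermitian] at this
    have hcoeff : (((n + (e+1) - 1).choose ((e+1) - 1) : ℂ)
        / ((n + k + (e+1) - 1).choose ((e+1) - 1) : ℂ)) = ((c : ℝ) : ℂ) := by
      rw [hcdef]
      push_cast
      ring
    have hρ0eq : wernerClone (e+1) n k P
        = ((c:ℝ):ℂ) • (symProj (e+1) (n+k) * A * symProj (e+1) (n+k)) := by
      unfold wernerClone
      rw [hcoeff]
    have hρ0 : (wernerClone (e+1) n k P).PosSemidef := by
      rw [hρ0eq]; exact psd_smul_real hsandPSD hc0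
    have hpjv : symProj (e+1) (n+k) *ᵥ v = v := symProj_mulVec ψ
    have hval : star v ⬝ᵥ ((symProj (e+1) (n+k) * A * symProj (e+1) (n+k)) *ᵥ v) = 1 := by
      rw [← Matrix.mulVec_mulVec, hpjv, ← Matrix.mulVec_mulVec, hvdef, dot_symProj_mulVec]
      rw [hAdef, hPdef]
      exact dot_kron_pure ψ hψ
    have hdot : star v ⬝ᵥ (wernerClone (e+1) n k P *ᵥ v) = ((c:ℝ):ℂ) := by
      rw [hρ0eq, Matrix.smul_mulVec, dotProduct_smul, hval, smul_eq_mul, mul_one]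
    have hsand : σ * wernerClone (e+1) n k P * σ = ((c:ℝ):ℂ) • σ := by
      rw [hσdef, hvdef] at *
      rw [sandwich ψ (wernerClone (e+1) n k P), hdot]
    have hσPSD : σ.PosSemidef := posSemidef_pureTensorPow ψ (n+k)
    have hσσ : σ * σ = σ := ptp_mul_self ψ hψ (n+k)
    have hσtr : σ.trace = 1 := ptp_trace ψ hψ (n+k)
    have hsq1 : sqrtPSD (wernerClone (e+1) n k P) = hρ0.sqrt := dif_pos hρ0
    have hsqσ : hσPSD.sqrt = σ := (hσPSD.eq_sqrt_of_sq_eq hσPSD (by rw [sq, hσσ])).symm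
    have hsq2 : sqrtPSD σ = σ := (dif_pos hσPSD).trans hsqσ
    unfold fidelity traceNorm
    rw [hsq1, hsq2]
    set B := hρ0.sqrt * σ with hBdef
    have hBB : Bᴴ * B = ((c:ℝ):ℂ) • σ := by
      rw [hBdef, Matrix.conjTranspose_mul, hσPSD.1, (hρ0.posSemidef_sqrt).1]
      calc σ * hρ0.sqrt * (hρ0.sqrt * σ)
          = σ * (hρ0.sqrt * hρ0.sqrt) * σ := by
            rw [Matrix.mul_assoc σ, ← Matrix.mul_assoc (hρ0.sqrt), ← Matrix.mul_assoc,
              ← Matrix.mul_assoc]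
        _ = σ * wernerClone (e+1) n k P * σ := by rw [hρ0.sqrt_mul_self]
        _ = ((c:ℝ):ℂ) • σ := hsand
    have hs1 : ((Real.sqrt c : ℂ) • σ).PosSemidef := psd_smul_real hσPSD (Real.sqrt_nonneg c)
    have hs2 : ((Real.sqrt c : ℂ) • σ) ^ 2 = Bᴴ * B := by
      rw [hBB, pow_two, Matrix.smul_mul, Matrix.mul_smul, smul_smul, hσσ,
        ← Complex.ofReal_mul, Real.mul_self_sqrt hc0]
    have h4 : ((Real.sqrt c : ℂ) • σ) = (Matrix.posSemidef_conjTranspose_mul_self B).sqrt :=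
      hs1.eq_sqrt_of_sq_eq _ hs2
    rw [← h4, Matrix.trace_smul, hσtr, smul_eq_mul, mul_one, Complex.ofReal_re]
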